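/- arXiv:1509.01752 — 3 statements merged into one kernel-verified Lean document; each statement's English description precedes it below -/
import Mathlib

section
/- For every positive integer d, Σ_{d'∣d} |μ(d/d')| · d' ≤ φ(d) · 3^{ω(d)}, where ω(d) is the number of distinct prime factors of d. -/
open ArithmeticFunction Finset

/-- squarefree indicator |μ| as an arithmetic function. -/
noncomputable def sqf : ArithmeticFunction ℕ :=
  ⟨fun n => (ArithmeticFunction.moebius n).natAbs, by simp⟩

lemma sqf_apply (n : ℕ) : sqf n = (ArithmeticFunction.moebius n).natAbs := rfl

lemma sqf_mult : sqf.IsMultiplicative := by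
  constructor
  · simp [sqf_apply]
  · intro m n h
    simp only [sqf_apply, ArithmeticFunction.isMultiplicative_moebius.map_mul_of_coprime h,
      Int.natAbs_mul]

noncomputable def F : ArithmeticFunction ℕ := sqf * ArithmeticFunction.id

lemma F_mult : F.IsMultiplicative := sqf_mult.mul ArithmeticFunction.isMultiplicative_id

noncomputable def G : ArithmeticFunction ℕ :=
  ⟨fun n => Nat.totient n * 3 ^ n.primeFactors.card, by simp⟩

lemma G_apply (n : ℕ) : G n = Nat.totient n * 3 ^ n.primeFactors.card := rfl

lemma G_mult : G.IsMultiplicative := by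
  rw [ArithmeticFunction.IsMultiplicative.iff_ne_zero]
  constructor
  · simp [G_apply]
  · intro m n hm hn h
    simp only [G_apply, Nat.totient_mul h, h.primeFactors_mul,
      Finset.card_union_of_disjoint (Nat.Coprime.disjoint_primeFactors h), pow_add]
    ring

lemma F_apply (n : ℕ) :
    F n = ∑ d' ∈ n.divisors, (ArithmeticFunction.moebius (n / d')).natAbs * d' := by
  rw [F, ArithmeticFunction.mul_apply]
  rw [Nat.sum_divisorsAntidiagonal' (f := fun x y => sqf x * ArithmeticFunction.id y)]
  simp [sqf_apply]

lemma prime_pow_le {p k : ℕ} (hp : p.Prime) (hk : 0 < k) : F (p ^ k) ≤ G (p ^ k) := by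
  have hF : F (p ^ k) = p ^ k + p ^ (k - 1) := by
    rw [F_apply, Nat.sum_divisors_prime_pow hp]
    have hstep : ∀ i ∈ Finset.range (k + 1),
        (ArithmeticFunction.moebius (p ^ k / p ^ i)).natAbs * p ^ i =
          (if i = k then p ^ k else 0) + (if i = k - 1 then p ^ (k - 1) else 0) := by
      intro i hi
      rw [Finset.mem_range, Nat.lt_succ_iff] at hi
      rw [Nat.pow_div hi hp.pos]
      rcases eq_or_ne i k with rfl | hik
      · simp [Nat.sub_eq_zero_of_le hi]
        omega
      rcases eq_or_ne i (k - 1) with rfl | hik1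
      · have h1 : k - (k - 1) = 1 := by omega
        simp [h1, ArithmeticFunction.moebius_apply_prime hp, hik]
      · have h2 : k - i ≠ 0 ∧ k - i ≠ 1 := by omega
        rw [ArithmeticFunction.moebius_apply_prime_pow hp h2.1, if_neg h2.2]
        simp [hik, hik1]
    rw [Finset.sum_congr rfl hstep, Finset.sum_add_distrib,
      Finset.sum_ite_eq' _ k, Finset.sum_ite_eq' _ (k - 1)]
    have : k ∈ Finset.range (k + 1) := by simp
    have : k - 1 ∈ Finset.range (k + 1) := by simp
    simp_all
  have hG : G (p ^ k) = (p - 1) * p ^ (k - 1) * 3 := by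
    rw [G_apply, Nat.totient_prime_pow hp hk, Nat.primeFactors_prime_pow hk.ne' hp]
    simp [mul_comm]
  rw [hF, hG]
  obtain ⟨m, rfl⟩ : ∃ m, p = m + 2 := ⟨p - 2, by have := hp.two_le; omega⟩
  have hq : 1 ≤ (m + 2) ^ (k - 1) := Nat.one_le_pow _ _ (by omega)
  have hpk' : (m + 2) ^ k = (m + 2) ^ (k - 1) * (m + 2) := by
    rw [← pow_succ]; congr 1; omega
  have hs : m + 2 - 1 = m + 1 := by omega
  rw [hpk', hs]
  nlinarith [hq]

theorem sum_moebius_divisor_le (d : ℕ) (hd : 0 < d) :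
    ∑ d' ∈ d.divisors, (ArithmeticFunction.moebius (d / d')).natAbs * d' ≤
      Nat.totient d * 3 ^ d.primeFactors.card := by
  rw [← F_apply, ← G_apply]
  rw [ArithmeticFunction.IsMultiplicative.multiplicative_factorization F F_mult hd.ne',
    ArithmeticFunction.IsMultiplicative.multiplicative_factorization G G_mult hd.ne']
  rw [Nat.prod_factorization_eq_prod_primeFactors, Nat.prod_factorization_eq_prod_primeFactors]
  refine Finset.prod_le_prod (fun _ _ => Nat.zero_le _) (fun p hp => ?_)
  exact prime_pow_le (Nat.prime_of_mem_primeFactors hp)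
    (Nat.Prime.factorization_pos_of_dvd (Nat.prime_of_mem_primeFactors hp) hd.ne'
      (Nat.dvd_of_mem_primeFactors hp))
end

section
/- There is a constant K > 0 such that for all real t ≥ 2, Σ_{d ≤ t} 3^{ω(d)} ≤ K · t · (log t)^2. -/
open Finset

lemma three_pow_omega_le_card {n d : ℕ} (hd : d ∈ Finset.Icc 1 n) :
    (3 : ℕ) ^ d.primeFactors.card ≤
      ((Finset.Icc 1 n ×ˢ Finset.Icc 1 n).filter (fun p => p.1 * p.2 ∣ d)).card := by
  classical
  obtain ⟨hd1, hdn⟩ := Finset.mem_Icc.mp hd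
  set P := d.primeFactors with hP
  have hcard : ((P.powerset.sigma fun A => A.powerset)).card = 3 ^ P.card := by
    rw [Finset.card_sigma]
    simp only [Finset.card_powerset]
    have := (Finset.prod_add (fun _ : ℕ => (2 : ℕ)) (fun _ => 1) P).symm
    simpa using this
  rw [← hcard]
  apply Finset.card_le_card_of_injOn (fun x => (∏ p ∈ x.2, p, ∏ p ∈ x.1 \ x.2, p))
  · rintro ⟨A, B⟩ hx
    rw [Finset.mem_coe, Finset.mem_sigma, Finset.mem_powerset, Finset.mem_powerset] at hx
    obtain ⟨hA, hB⟩ := hx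
    have hBA : B ∪ A \ B = A := Finset.union_sdiff_of_subset hB
    have hprod : (∏ p ∈ B, p) * ∏ p ∈ A \ B, p = ∏ p ∈ A, p := by
      rw [← Finset.prod_union Finset.disjoint_sdiff, hBA]
    have hAd : (∏ p ∈ A, p) ∣ d :=
      (Finset.prod_dvd_prod_of_subset A P _ hA).trans (Nat.prod_primeFactors_dvd d)
    have habd : (∏ p ∈ B, p) * (∏ p ∈ A \ B, p) ∣ d := by rw [hprod]; exact hAd
    have h1 : (∏ p ∈ B, p) ∣ d := (dvd_mul_right _ _).trans habd
    have h2 : (∏ p ∈ A \ B, p) ∣ d := (dvd_mul_left _ _).trans habd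
    simp only [Finset.mem_coe, Finset.mem_filter, Finset.mem_product, Finset.mem_Icc]
    exact ⟨⟨⟨Nat.pos_of_dvd_of_pos h1 (by omega), (Nat.le_of_dvd (by omega) h1).trans hdn⟩,
      ⟨Nat.pos_of_dvd_of_pos h2 (by omega), (Nat.le_of_dvd (by omega) h2).trans hdn⟩⟩, habd⟩
  · rintro ⟨A, B⟩ hx ⟨A', B'⟩ hx' heq
    rw [Finset.mem_coe, Finset.mem_sigma, Finset.mem_powerset, Finset.mem_powerset] at hx hx'
    have hB : B ⊆ A := hx.2
    have hB' : B' ⊆ A' := hx'.2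
    have hA : A ⊆ P := hx.1
    have hA' : A' ⊆ P := hx'.1
    have hprime : ∀ s : Finset ℕ, s ⊆ P → ∀ p ∈ s, p.Prime := fun s hs p hp =>
      Nat.prime_of_mem_primeFactors (hs hp)
    simp only [Prod.mk.injEq] at heq
    obtain ⟨h1, h2⟩ := heq
    have hBB : B = B' := by
      have := congrArg Nat.primeFactors h1
      rwa [Nat.primeFactors_prod (hprime B (hB.trans hA)),
        Nat.primeFactors_prod (hprime B' (hB'.trans hA'))] at this
    have hDD : A \ B = A' \ B' := by
      have := congrArg Nat.primeFactors h2
      rwa [Nat.primeFactors_prod (hprime _ ((Finset.sdiff_subset).trans hA)),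
        Nat.primeFactors_prod (hprime _ ((Finset.sdiff_subset).trans hA'))] at this
    have hAA : A = A' := by
      rw [← Finset.union_sdiff_of_subset hB, ← Finset.union_sdiff_of_subset hB', hDD, hBB]
    subst hAA; subst hBB; rfl
theorem sum_three_pow_omega_le :
    ∃ K : ℝ, 0 < K ∧ ∀ t : ℝ, 2 ≤ t →
      ∑ d ∈ Finset.Icc 1 ⌊t⌋₊, (3 : ℝ) ^ d.primeFactors.card ≤
        K * t * (Real.log t) ^ 2 := by
  refine ⟨9, by norm_num, fun t ht => ?_⟩
  set n := ⌊t⌋₊ with hn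
  have ht0 : (0:ℝ) < t := by linarith
  have hn2 : 2 ≤ n := Nat.le_floor (by exact_mod_cast ht)
  have hnt : (n : ℝ) ≤ t := Nat.floor_le ht0.le
  have hH : ∑ a ∈ Finset.Icc 1 n, ((a:ℝ))⁻¹ ≤ 1 + Real.log t := by
    have h1 : ((harmonic n : ℚ) : ℝ) ≤ 1 + Real.log n := harmonic_le_one_add_log n
    have h2 : Real.log (n:ℝ) ≤ Real.log t := Real.log_le_log (by positivity) hnt
    have h3 : ((harmonic n : ℚ) : ℝ) = ∑ a ∈ Finset.Icc 1 n, ((a:ℝ))⁻¹ := by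
      rw [harmonic_eq_sum_Icc]; push_cast; rfl
    linarith
  calc ∑ d ∈ Finset.Icc 1 n, (3:ℝ) ^ d.primeFactors.card
      ≤ ∑ d ∈ Finset.Icc 1 n,
          (((Finset.Icc 1 n ×ˢ Finset.Icc 1 n).filter (fun p => p.1 * p.2 ∣ d)).card : ℝ) := by
        refine Finset.sum_le_sum fun d hd => ?_
        exact_mod_cast three_pow_omega_le_card hd
    _ = ∑ p ∈ Finset.Icc 1 n ×ˢ Finset.Icc 1 n,
          (((Finset.Icc 1 n).filter (fun d => p.1 * p.2 ∣ d)).card : ℝ) := by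
        simp_rw [Finset.card_filter]
        push_cast
        rw [Finset.sum_comm]
    _ ≤ ∑ p ∈ Finset.Icc 1 n ×ˢ Finset.Icc 1 n, (n : ℝ) * ((p.1:ℝ))⁻¹ * ((p.2:ℝ))⁻¹ := by
        refine Finset.sum_le_sum fun p hp => ?_
        rw [show Finset.Icc 1 n = Finset.Ioc 0 n from Finset.Icc_add_one_left_eq_Ioc 0 n,
          Nat.Ioc_filter_dvd_card_eq_div]
        refine (Nat.cast_div_le).trans ?_
        rw [div_eq_mul_inv]
        push_cast
        rw [mul_inv, mul_assoc]
    _ = (n : ℝ) * (∑ a ∈ Finset.Icc 1 n, ((a:ℝ))⁻¹)^2 := by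
        rw [Finset.sum_product, sq, Finset.sum_mul_sum, Finset.mul_sum]
        refine Finset.sum_congr rfl fun a _ => ?_
        rw [Finset.mul_sum]
        exact Finset.sum_congr rfl fun b _ => by ring
    _ ≤ 9 * t * Real.log t ^ 2 := by
        have hHpos : 0 ≤ ∑ a ∈ Finset.Icc 1 n, ((a:ℝ))⁻¹ :=
          Finset.sum_nonneg fun a _ => by positivity
        have hlog2 : (0.6931471803 : ℝ) < Real.log 2 := Real.log_two_gt_d9
        have hlogt : Real.log 2 ≤ Real.log t := Real.log_le_log (by norm_num) ht
        have hH3 : ∑ a ∈ Finset.Icc 1 n, ((a:ℝ))⁻¹ ≤ 3 * Real.log t := by linarith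
        have hsq : (∑ a ∈ Finset.Icc 1 n, ((a:ℝ))⁻¹)^2 ≤ (3 * Real.log t)^2 :=
          pow_le_pow_left₀ hHpos hH3 2
        have h9 : (n : ℝ) * (∑ a ∈ Finset.Icc 1 n, ((a:ℝ))⁻¹)^2 ≤ t * (3 * Real.log t)^2 :=
          mul_le_mul hnt hsq (by positivity) ht0.le
        nlinarith [h9]
end

section
/- The series Σ_{k=1}^∞ (μ(k)/k^2) · ∏_{p∣k} (1 + (p-1)/(p^2 - p + 1)) converges absolutely and its sum equals ζ(6)/(ζ(2)ζ(3)). -/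
open ArithmeticFunction Complex

noncomputable def Fre (k : ℕ) : ℝ :=
  (ArithmeticFunction.moebius k : ℝ) / (k : ℝ) ^ 2 *
    ∏ p ∈ k.primeFactors, (1 + ((p : ℝ) - 1) / ((p : ℝ) ^ 2 - p + 1))

lemma Fre_one : Fre 1 = 1 := by simp [Fre]

lemma Fre_zero : Fre 0 = 0 := by simp [Fre]

lemma Fre_mul {m n : ℕ} (h : Nat.Coprime m n) : Fre (m * n) = Fre m * Fre n := by
  unfold Fre
  rw [h.primeFactors_mul, Finset.prod_union h.disjoint_primeFactors,
    isMultiplicative_moebius.map_mul_of_coprime h]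
  push_cast
  ring

lemma factor_pos {p : ℕ} (hp : p.Prime) : (0:ℝ) < (p:ℝ)^2 - p + 1 := by
  have h2 : (2:ℝ) ≤ (p:ℝ) := by exact_mod_cast hp.two_le
  nlinarith

lemma factor_le_sqrt {p : ℕ} (hp : p.Prime) :
    1 + ((p : ℝ) - 1) / ((p : ℝ) ^ 2 - p + 1) ≤ Real.sqrt p := by
  have h2 : (2:ℝ) ≤ (p:ℝ) := by exact_mod_cast hp.two_le
  have hd := factor_pos hp
  have h1 : ((p : ℝ) - 1) / ((p : ℝ) ^ 2 - p + 1) ≤ 1/3 := by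
    rw [div_le_iff₀ hd]
    nlinarith [sq_nonneg ((p:ℝ) - 2)]
  have h3 : (4/3 : ℝ) ≤ Real.sqrt p := by
    rw [show (4/3:ℝ) = Real.sqrt ((4/3)^2) by rw [Real.sqrt_sq]; norm_num]
    apply Real.sqrt_le_sqrt; nlinarith
  linarith

lemma factor_nonneg {p : ℕ} (hp : p.Prime) :
    0 ≤ 1 + ((p : ℝ) - 1) / ((p : ℝ) ^ 2 - p + 1) := by
  have h2 : (2:ℝ) ≤ (p:ℝ) := by exact_mod_cast hp.two_le
  have hd := factor_pos hp
  have := div_nonneg (by linarith : (0:ℝ) ≤ (p:ℝ) - 1) hd.le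
  linarith

lemma Fre_abs_le (k : ℕ) : |Fre k| ≤ Real.sqrt k / (k:ℝ)^2 := by
  rcases eq_or_ne (moebius k) 0 with h | h
  · simp [Fre, h]
    positivity
  · have hsq : Squarefree k := moebius_ne_zero_iff_squarefree.mp h
    have hk0 : k ≠ 0 := hsq.ne_zero
    have habs : |(moebius k : ℝ)| = 1 := by
      rcases moebius_ne_zero_iff_eq_or.mp h with h1 | h1 <;> rw [h1] <;> norm_num
    have hprod : |∏ p ∈ k.primeFactors, (1 + ((p : ℝ) - 1) / ((p : ℝ) ^ 2 - p + 1))| ≤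
        Real.sqrt k := by
      rw [_root_.abs_of_nonneg (Finset.prod_nonneg fun p hp =>
        factor_nonneg (Nat.prime_of_mem_primeFactors hp))]
      calc ∏ p ∈ k.primeFactors, (1 + ((p : ℝ) - 1) / ((p : ℝ) ^ 2 - p + 1))
          ≤ ∏ p ∈ k.primeFactors, Real.sqrt p := by
            apply Finset.prod_le_prod (fun p hp => factor_nonneg (Nat.prime_of_mem_primeFactors hp))
              (fun p hp => factor_le_sqrt (Nat.prime_of_mem_primeFactors hp))
        _ = Real.sqrt (∏ p ∈ k.primeFactors, (p:ℝ)) := by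
            induction k.primeFactors using Finset.induction with
            | empty => simp
            | insert _ _ h ih =>
              rw [Finset.prod_insert h, Finset.prod_insert h, ih,
                Real.sqrt_mul (by positivity)]
        _ = Real.sqrt k := by
            rw [← Nat.cast_prod, Nat.prod_primeFactors_of_squarefree hsq]
    rw [Fre, abs_mul, abs_div, habs, _root_.abs_pow, _root_.abs_of_nonneg (by positivity : (0:ℝ) ≤ (k:ℝ))]
    calc 1 / (k:ℝ)^2 * |∏ p ∈ k.primeFactors, (1 + ((p : ℝ) - 1) / ((p : ℝ) ^ 2 - p + 1))|
        ≤ 1 / (k:ℝ)^2 * Real.sqrt k := by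
          apply mul_le_mul_of_nonneg_left hprod (by positivity)
      _ = Real.sqrt k / (k:ℝ)^2 := by ring

lemma sqrt_div_summable : Summable (fun k : ℕ => Real.sqrt k / (k:ℝ)^2) := by
  have : (fun k : ℕ => Real.sqrt k / (k:ℝ)^2) = fun k : ℕ => (k:ℝ) ^ (-(3/2) : ℝ) := by
    funext k
    rcases Nat.eq_zero_or_pos k with rfl | hk
    · simp [Real.zero_rpow (by norm_num : (-(3/2):ℝ) ≠ 0)]
    · have hk' : (0:ℝ) < k := by exact_mod_cast hk
      rw [Real.sqrt_eq_rpow, ← Real.rpow_natCast (k:ℝ) 2, ← Real.rpow_sub hk']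
      norm_num
  rw [this]
  exact Real.summable_nat_rpow.mpr (by norm_num)

noncomputable def Fc (k : ℕ) : ℂ := (Fre k : ℂ)

lemma Fre_summable_abs : Summable (fun k : ℕ => |Fre k|) :=
  Summable.of_nonneg_of_le (fun k => abs_nonneg _) Fre_abs_le sqrt_div_summable

lemma Fc_norm_summable : Summable (fun k : ℕ => ‖Fc k‖) := by
  simpa [Fc] using Fre_summable_abs

lemma Fc_pp (p : Nat.Primes) : ∑' e : ℕ, Fc ((p:ℕ) ^ e) = 1 + Fc p := by
  rw [tsum_eq_sum (s := {0, 1}) ?h]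
  · rw [Finset.sum_pair (by norm_num)]
    simp [Fc, Fre_one]
  · intro e he
    simp only [Finset.mem_insert, Finset.mem_singleton] at he
    push_neg at he
    have : ¬ Squarefree ((p:ℕ) ^ e) := by
      rw [Nat.squarefree_pow_iff p.prop.ne_one he.1]
      tauto
    simp [Fc, Fre, moebius_eq_zero_of_not_squarefree this]

lemma Fc_hasProd : HasProd (fun p : Nat.Primes => 1 + Fc p) (∑' n, Fc n) := by
  have h := EulerProduct.eulerProduct_hasProd (f := Fc) (by simp [Fc, Fre_one])
    (fun {m n} h => by simp [Fc, Fre_mul h, ofReal_mul]) Fc_norm_summable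
    (by simp [Fc, Fre_zero])
  simpa only [Fc_pp] using h

lemma key_identity (p : Nat.Primes) :
    (1 - (p:ℂ) ^ (-2:ℂ))⁻¹ * (1 - (p:ℂ) ^ (-3:ℂ))⁻¹ * (1 + Fc p) =
      (1 - (p:ℂ) ^ (-6:ℂ))⁻¹ := by
  have hp2 : (2:ℝ) ≤ ((p:ℕ):ℝ) := by exact_mod_cast p.prop.two_le
  have e2 : ((p:ℕ):ℂ) ^ (-2:ℂ) = (((p:ℕ):ℂ) ^ (2:ℕ))⁻¹ := by
    rw [show (-2:ℂ) = -((2:ℕ):ℂ) by norm_num, cpow_neg, cpow_natCast]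
  have e3 : ((p:ℕ):ℂ) ^ (-3:ℂ) = (((p:ℕ):ℂ) ^ (3:ℕ))⁻¹ := by
    rw [show (-3:ℂ) = -((3:ℕ):ℂ) by norm_num, cpow_neg, cpow_natCast]
  have e6 : ((p:ℕ):ℂ) ^ (-6:ℂ) = (((p:ℕ):ℂ) ^ (6:ℕ))⁻¹ := by
    rw [show (-6:ℂ) = -((6:ℕ):ℂ) by norm_num, cpow_neg, cpow_natCast]
  have hFc : Fc p = (-1) / ((p:ℕ):ℂ)^2 *
      (1 + (((p:ℕ):ℂ) - 1) / (((p:ℕ):ℂ)^2 - (p:ℕ) + 1)) := by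
    simp only [Fc, Fre, moebius_apply_prime p.prop, p.prop.primeFactors,
      Finset.prod_singleton]
    push_cast
    ring
  have hx : ((p:ℕ):ℂ) ≠ 0 := by
    exact_mod_cast Nat.cast_ne_zero.mpr p.prop.pos.ne'
  have h2 : ((p:ℕ):ℂ)^2 - 1 ≠ 0 := by
    have : ((p:ℕ):ℂ)^2 - 1 = ((((p:ℕ):ℝ)^2 - 1 : ℝ) : ℂ) := by push_cast; ring
    rw [this, ofReal_ne_zero]; nlinarith
  have h3 : ((p:ℕ):ℂ)^3 - 1 ≠ 0 := by
    have : ((p:ℕ):ℂ)^3 - 1 = ((((p:ℕ):ℝ)^3 - 1 : ℝ) : ℂ) := by push_cast; ring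
    have h8 : (2:ℝ)^3 ≤ ((p:ℕ):ℝ)^3 := pow_le_pow_left₀ (by norm_num) hp2 3
    rw [this, ofReal_ne_zero]; nlinarith
  have h6 : ((p:ℕ):ℂ)^6 - 1 ≠ 0 := by
    have : ((p:ℕ):ℂ)^6 - 1 = ((((p:ℕ):ℝ)^6 - 1 : ℝ) : ℂ) := by push_cast; ring
    have h8 : (2:ℝ)^6 ≤ ((p:ℕ):ℝ)^6 := pow_le_pow_left₀ (by norm_num) hp2 6
    rw [this, ofReal_ne_zero]; nlinarith
  have hq : ((p:ℕ):ℂ)^2 - (p:ℕ) + 1 ≠ 0 := by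
    have : ((p:ℕ):ℂ)^2 - (p:ℕ) + 1 = ((((p:ℕ):ℝ)^2 - (p:ℕ) + 1 : ℝ) : ℂ) := by
      push_cast; ring
    rw [this, ofReal_ne_zero]; nlinarith
  rw [e2, e3, e6, hFc]
  have hq' : ((p:ℕ):ℂ) * (((p:ℕ):ℂ) - 1) + 1 ≠ 0 := by
    rw [show ((p:ℕ):ℂ) * (((p:ℕ):ℂ) - 1) + 1 = ((p:ℕ):ℂ)^2 - (p:ℕ) + 1 by ring]; exact hq
  field_simp
  ring

theorem moebius_series_zeta :
    Summable (fun k : ℕ => |(ArithmeticFunction.moebius k : ℝ) / (k : ℝ) ^ 2 *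
        ∏ p ∈ k.primeFactors, (1 + ((p : ℝ) - 1) / ((p : ℝ) ^ 2 - p + 1))|) ∧
      ((∑' k : ℕ, (ArithmeticFunction.moebius k : ℝ) / (k : ℝ) ^ 2 *
        ∏ p ∈ k.primeFactors, (1 + ((p : ℝ) - 1) / ((p : ℝ) ^ 2 - p + 1)) : ℝ) : ℂ) =
        riemannZeta 6 / (riemannZeta 2 * riemannZeta 3) := by
  constructor
  · exact Fre_summable_abs
  · have hP2 : HasProd (fun p : Nat.Primes => (1 - (p:ℂ) ^ (-2:ℂ))⁻¹) (riemannZeta 2) :=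
      riemannZeta_eulerProduct_hasProd (by norm_num)
    have hP3 : HasProd (fun p : Nat.Primes => (1 - (p:ℂ) ^ (-3:ℂ))⁻¹) (riemannZeta 3) :=
      riemannZeta_eulerProduct_hasProd (by norm_num)
    have hP6 : HasProd (fun p : Nat.Primes => (1 - (p:ℂ) ^ (-6:ℂ))⁻¹) (riemannZeta 6) :=
      riemannZeta_eulerProduct_hasProd (by norm_num)
    have hAll : HasProd (fun p : Nat.Primes =>
        (1 - (p:ℂ) ^ (-2:ℂ))⁻¹ * (1 - (p:ℂ) ^ (-3:ℂ))⁻¹ * (1 + Fc p))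
        (riemannZeta 2 * riemannZeta 3 * (∑' n, Fc n)) :=
      (hP2.mul hP3).mul Fc_hasProd
    rw [funext key_identity] at hAll
    have heq : riemannZeta 2 * riemannZeta 3 * (∑' n, Fc n) = riemannZeta 6 :=
      hAll.unique hP6
    have hz2 : riemannZeta 2 ≠ 0 := riemannZeta_ne_zero_of_one_lt_re (by norm_num)
    have hz3 : riemannZeta 3 ≠ 0 := riemannZeta_ne_zero_of_one_lt_re (by norm_num)
    have hsum : ((∑' k : ℕ, Fre k : ℝ) : ℂ) = ∑' n, Fc n := ofReal_tsum _
    show ((∑' k : ℕ, Fre k : ℝ) : ℂ) = _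
    rw [hsum, ← heq]
    field_simp
end
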